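/- Let K be a convex body in ℝⁿ containing the unit ball B₂ⁿ. Then for all 0 < t ≤ 1 the set {x ∈ ∂K : r_K(x) ≥ t} is closed and satisfies (1-t)^{n-1} vol_{n-1}(∂K) ≤ H_{n-1}({x ∈ ∂K : r_K(x) ≥ t}), where H_{n-1} is the (n-1)-dimensional Hausdorff measure. -/

import Mathlib

open MeasureTheory RealInnerProductSpace Classical

/-- The outer unit normal of `K` at `x`, when it exists uniquely; `0` otherwise. -/
noncomputable def outerNormalAt {n : ℕ} (K : Set (EuclideanSpace ℝ (Fin n)))
    (x : EuclideanSpace ℝ (Fin n)) : EuclideanSpace ℝ (Fin n) :=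
  if h : ∃! u : EuclideanSpace ℝ (Fin n), ‖u‖ = 1 ∧ ∀ y ∈ K, ⟪y - x, u⟫ ≤ 0 then
    h.choose
  else 0

/-- The rolling function `r_K(x)`: the radius of the largest Euclidean ball contained in
`K` touching `∂K` at `x` (and `0` if the outer normal at `x` is not unique). -/
noncomputable def rollingRadius {n : ℕ} (K : Set (EuclideanSpace ℝ (Fin n)))
    (x : EuclideanSpace ℝ (Fin n)) : ℝ :=
  sSup {ρ : ℝ | 0 ≤ ρ ∧ Metric.closedBall (x - ρ • outerNormalAt K x) ρ ⊆ K}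

open Metric
open scoped Pointwise NNReal ENNReal

section Alg

variable {F : Type*} [NormedAddCommGroup F] [InnerProductSpace ℝ F]

lemma sq_le_imp_norm_le {a b : F} (h : ⟪a, a⟫ ≤ ⟪b, b⟫) : ‖a‖ ≤ ‖b‖ := by
  rw [real_inner_self_eq_norm_sq, real_inner_self_eq_norm_sq] at h
  have := Real.sqrt_le_sqrt h
  rwa [Real.sqrt_sq (norm_nonneg _), Real.sqrt_sq (norm_nonneg _)] at this

lemma center_lip {t : ℝ} (ht : 0 ≤ t) (z₁ z₂ u₁ u₂ : F)
    (hu₁ : ‖u₁‖ = 1) (hu₂ : ‖u₂‖ = 1)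
    (h₁ : ⟪z₂ - t • u₂ + t • u₁ - z₁, u₁⟫ ≤ 0)
    (h₂ : ⟪z₁ - t • u₁ + t • u₂ - z₂, u₂⟫ ≤ 0) :
    ‖(z₁ - t • u₁) - (z₂ - t • u₂)‖ ≤ ‖z₁ - z₂‖ := by
  have hu₁' : ⟪u₁, u₁⟫ = 1 := by
    rw [real_inner_self_eq_norm_sq, hu₁]; norm_num
  have hu₂' : ⟪u₂, u₂⟫ = 1 := by
    rw [real_inner_self_eq_norm_sq, hu₂]; norm_num
  have hs : ⟪u₁, u₂⟫ ≤ 1 := by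
    have := real_inner_le_norm u₁ u₂; rw [hu₁, hu₂] at this; linarith
  apply sq_le_imp_norm_le
  simp only [inner_sub_left, inner_sub_right, inner_add_left, inner_add_right,
    real_inner_smul_left, real_inner_smul_right] at h₁ h₂ ⊢
  nlinarith [hs, ht, mul_le_mul_of_nonneg_left h₁ ht, mul_le_mul_of_nonneg_left h₂ ht,
    mul_nonneg (mul_nonneg ht ht) (sub_nonneg.2 hs),
    real_inner_comm z₁ u₁, real_inner_comm z₁ u₂, real_inner_comm z₂ u₁,
    real_inner_comm z₂ u₂, real_inner_comm u₁ u₂, real_inner_comm z₁ z₂]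

lemma proj_lip_alg (x₁ x₂ p₁ p₂ : F)
    (h₁ : ⟪x₁ - p₁, p₂ - p₁⟫ ≤ 0) (h₂ : ⟪x₂ - p₂, p₁ - p₂⟫ ≤ 0) :
    ‖p₁ - p₂‖ ≤ ‖x₁ - x₂‖ := by
  have key : ⟪p₁ - p₂, p₁ - p₂⟫ ≤ ⟪x₁ - x₂, p₁ - p₂⟫ := by
    simp only [inner_sub_left, inner_sub_right] at h₁ h₂ ⊢
    linarith [real_inner_comm p₂ p₁, real_inner_comm x₁ p₁, real_inner_comm x₂ p₂,
      real_inner_comm x₁ p₂, real_inner_comm x₂ p₁]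
  have cs : ⟪x₁ - x₂, p₁ - p₂⟫ ≤ ‖x₁ - x₂‖ * ‖p₁ - p₂‖ := real_inner_le_norm _ _
  rw [real_inner_self_eq_norm_sq] at key
  nlinarith [norm_nonneg (p₁ - p₂), norm_nonneg (x₁ - x₂)]

end Alg

section Alg
variable {F : Type*} [NormedAddCommGroup F] [InnerProductSpace ℝ F]

lemma sq_lt_imp_norm_lt {a : F} {r : ℝ} (hr : 0 ≤ r) (h : ⟪a, a⟫ < r ^ 2) : ‖a‖ < r := by
  rw [real_inner_self_eq_norm_sq] at h
  nlinarith [norm_nonneg a]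

/-- supporting property of the touching direction -/
lemma support_of_ball {K : Set F} (hconv : Convex ℝ K) {z u : F} {t : ℝ}
    (hzi : z ∉ interior K) (hu : ‖u‖ = 1) (ht : 0 < t)
    (hball : Metric.closedBall (z - t • u) t ⊆ K) :
    ∀ y ∈ K, ⟪y - z, u⟫ ≤ 0 := by
  by_contra hcon
  push_neg at hcon
  obtain ⟨y, hy, hp⟩ := hcon
  set p : ℝ := ⟪y - z, u⟫ with hpdef
  have hzy : (0:ℝ) < ‖z - y‖ := by
    rw [norm_pos_iff, sub_ne_zero]
    rintro rfl
    simp [hpdef] at hp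
  set μ : ℝ := t * p / ‖z - y‖ ^ 2 with hμdef
  have hμ : 0 < μ := by positivity
  have h1μ : (0:ℝ) < 1 + μ := by linarith
  set center : F := (1/(1+μ)) • (z - t • u) + (μ/(1+μ)) • y with hcenterdef
  have hsub : Metric.ball center (t/(1+μ)) ⊆ K := by
    intro x hx
    rw [Metric.mem_ball, dist_eq_norm] at hx
    have hx'c : ((1+μ) • x - μ • y) - (z - t • u) = (1+μ) • (x - center) := by
      rw [hcenterdef]
      match_scalars <;> (field_simp; try ring)
    have hx'K : ((1+μ) • x - μ • y) ∈ K := by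
      apply hball
      rw [Metric.mem_closedBall, dist_eq_norm, hx'c, norm_smul]
      rw [Real.norm_eq_abs, abs_of_pos h1μ]
      calc (1+μ) * ‖x - center‖ ≤ (1+μ) * (t/(1+μ)) := by
            apply mul_le_mul_of_nonneg_left hx.le h1μ.le
        _ = t := by field_simp
    have hxcomb : x = (1/(1+μ)) • ((1+μ) • x - μ • y) + (μ/(1+μ)) • y := by
      match_scalars <;> (field_simp; try ring)
    rw [hxcomb]
    apply hconv hx'K hy (by positivity) (by positivity)
    field_simp
  have hzmem : z ∈ Metric.ball center (t/(1+μ)) := by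
    rw [Metric.mem_ball, dist_eq_norm]
    have hzc : z - center = (1/(1+μ)) • (t • u + μ • (z - y)) := by
      rw [hcenterdef]
      match_scalars <;> (field_simp; try ring)
    rw [hzc, norm_smul, Real.norm_eq_abs, abs_of_pos (by positivity : (0:ℝ) < 1/(1+μ))]
    rw [one_div, div_eq_inv_mul]
    apply mul_lt_mul_of_pos_left _ (by positivity)
    apply sq_lt_imp_norm_lt ht.le
    have hinner : ⟪z - y, u⟫ = -p := by
      rw [hpdef, ← inner_neg_left, neg_sub]
    have expand : ⟪t • u + μ • (z - y), t • u + μ • (z - y)⟫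
        = t^2 * ⟪u, u⟫ + 2 * (t * μ) * ⟪z - y, u⟫ + μ^2 * ⟪z - y, z - y⟫ := by
      simp only [inner_add_left, inner_add_right, real_inner_smul_left, real_inner_smul_right]
      rw [real_inner_comm u (z - y)]
      ring
    have huu : ⟪u, u⟫ = 1 := by rw [real_inner_self_eq_norm_sq, hu]; norm_num
    have hzz : ⟪z - y, z - y⟫ = ‖z - y‖^2 := real_inner_self_eq_norm_sq _
    rw [expand, hinner, huu, hzz]
    have hμnorm : μ^2 * ‖z - y‖^2 = μ * (t * p) := by
      rw [hμdef]; field_simp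
    nlinarith [mul_pos (mul_pos ht hμ) hp]
  exact hzi (mem_interior.2 ⟨_, hsub, Metric.isOpen_ball, hzmem⟩)

/-- uniqueness of the outer normal at a point touched by an interior ball -/
lemma normal_eq_of_ball {K : Set F} {z u w : F} {t : ℝ} (ht : 0 < t) (hu : ‖u‖ = 1)
    (hball : Metric.closedBall (z - t • u) t ⊆ K)
    (hw1 : ‖w‖ = 1) (hw2 : ∀ y ∈ K, ⟪y - z, w⟫ ≤ 0) : w = u := by
  have hy₀ : z - t • u + t • w ∈ K := by
    apply hball
    rw [Metric.mem_closedBall, dist_eq_norm]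
    have : z - t • u + t • w - (z - t • u) = t • w := by abel
    rw [this, norm_smul, Real.norm_eq_abs, abs_of_pos ht, hw1, mul_one]
  have h := hw2 _ hy₀
  have hww : ⟪w, w⟫ = 1 := by
    rw [real_inner_self_eq_norm_sq, hw1]; norm_num
  have hexp : z - t • u + t • w - z = t • w - t • u := by abel
  rw [hexp] at h
  simp only [inner_sub_left, real_inner_smul_left] at h
  rw [hww] at h
  have huw : 1 ≤ ⟪u, w⟫ := by nlinarith
  have hz : ⟪u - w, u - w⟫ ≤ 0 := by
    simp only [inner_sub_left, inner_sub_right]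
    have huu : ⟪u, u⟫ = 1 := by rw [real_inner_self_eq_norm_sq, hu]; norm_num
    linarith [real_inner_comm w u, huu, hww, huw]
  have h0 := le_antisymm hz real_inner_self_nonneg
  rw [real_inner_self_eq_norm_sq] at h0
  have : ‖u - w‖ = 0 := by nlinarith [norm_nonneg (u - w)]
  rw [norm_eq_zero, sub_eq_zero] at this
  exact this.symm

end Alg

section Proj
variable {F : Type*} [NormedAddCommGroup F] [InnerProductSpace ℝ F] [CompleteSpace F]

lemma exists_proj {C : Set F} (hCcl : IsClosed C) (hCconv : Convex ℝ C) (hne : C.Nonempty)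
    (x : F) : ∃ p, p ∈ C ∧ ∀ w ∈ C, ⟪x - p, w - p⟫ ≤ 0 := by
  obtain ⟨v, hv, hmin⟩ := exists_norm_eq_iInf_of_complete_convex hne hCcl.isComplete hCconv x
  exact ⟨v, hv, (norm_eq_iInf_iff_real_inner_le_zero hCconv hv).1 hmin⟩

lemma exists_unit_support {C : Set F} (hCconv : Convex ℝ C) (hCcl : IsClosed C)
    (h0 : 0 ∈ interior C) {y : F} (hy : y ∈ frontier C) :
    ∃ v : F, ‖v‖ = 1 ∧ ∀ a ∈ C, ⟪a - y, v⟫ ≤ 0 := by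
  have hyC : y ∈ C := by have := hy.1; rwa [hCcl.closure_eq] at this
  obtain ⟨f, hf⟩ := geometric_hahn_banach_open_point hCconv.interior isOpen_interior hy.2
  have hfy : 0 < f y := by
    have := hf 0 h0
    simpa using this
  have hsupp : ∀ a ∈ C, f a ≤ f y := by
    intro a ha
    by_contra hgt
    push_neg at hgt
    have hcombo : ∀ θ : ℝ, 0 < θ → 0 ≤ 1 - θ → (1 - θ) • a ∈ interior C := by
      intro θ hθ hθ'
      have := hCconv.combo_interior_closure_mem_interior h0 (subset_closure ha) hθ hθ'
        (by ring)
      simpa using this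
    have hfa : 0 < f a := by
      have h2 := hf _ (hcombo (1/2) (by norm_num) (by norm_num))
      rw [ContinuousLinearMap.map_smul, smul_eq_mul] at h2
      nlinarith
    have hfapos : (0:ℝ) < f a := hfa
    have h3 := hf _ (hcombo ((f a - f y)/(f a)) (div_pos (by linarith) hfa) (by
      rw [sub_div, div_self hfa.ne']
      have : f y / f a ≥ 0 := by positivity
      linarith))
    rw [ContinuousLinearMap.map_smul, smul_eq_mul, sub_div, div_self hfa.ne'] at h3
    have : (1 - (1 - f y / f a)) * f a = f y := by field_simp; ring
    nlinarith
  set v₀ : F := (InnerProductSpace.toDual ℝ F).symm f with hv₀def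
  have hv₀ : ∀ x : F, ⟪v₀, x⟫ = f x := fun x => InnerProductSpace.toDual_symm_apply
  have hv₀ne : v₀ ≠ 0 := by
    intro h0'
    rw [← hv₀ y, h0'] at hfy
    simp at hfy
  refine ⟨(‖v₀‖⁻¹ : ℝ) • v₀, norm_smul_inv_norm hv₀ne, ?_⟩
  intro a ha
  rw [real_inner_comm, real_inner_smul_left, hv₀, map_sub]
  have h4 : f a - f y ≤ 0 := by linarith [hsupp a ha]
  have h5 : (0:ℝ) ≤ ‖v₀‖⁻¹ := by positivity
  exact mul_nonpos_of_nonneg_of_nonpos h5 h4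

end Proj

section Euc
variable {n : ℕ} {K : Set (EuclideanSpace ℝ (Fin n))}


lemma bddAbove_rollSet (hKb : Bornology.IsBounded K) {z u : EuclideanSpace ℝ (Fin n)}
    (hu : ‖u‖ = 1) :
    BddAbove {ρ : ℝ | 0 ≤ ρ ∧ Metric.closedBall (z - ρ • u) ρ ⊆ K} := by
  obtain ⟨R, hR⟩ := hKb.subset_closedBall (0 : EuclideanSpace ℝ (Fin n))
  refine ⟨(‖z‖ + R)/2, ?_⟩
  rintro ρ ⟨hρ0, hρ⟩
  have hmem : z - ρ • u - ρ • u ∈ Metric.closedBall (z - ρ • u) ρ := by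
    rw [Metric.mem_closedBall, dist_eq_norm]
    have : z - ρ • u - ρ • u - (z - ρ • u) = -(ρ • u) := by abel
    rw [this, norm_neg, norm_smul, Real.norm_eq_abs, abs_of_nonneg hρ0, hu, mul_one]
  have h2 : z - ρ • u - ρ • u ∈ Metric.closedBall (0 : EuclideanSpace ℝ (Fin n)) R :=
    hR (hρ hmem)
  rw [Metric.mem_closedBall, dist_zero_right] at h2
  have key : 2 * ρ ≤ ‖z‖ + R := by
    have h3 : ‖(2*ρ) • u‖ = 2 * ρ := by
      rw [norm_smul, Real.norm_eq_abs, abs_of_nonneg (by linarith), hu, mul_one]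
    have h4 : (2*ρ) • u = z - (z - ρ • u - ρ • u) := by module
    rw [h4] at h3
    calc 2 * ρ = ‖z - (z - ρ • u - ρ • u)‖ := h3.symm
      _ ≤ ‖z‖ + ‖z - ρ • u - ρ • u‖ := norm_sub_le _ _
      _ ≤ ‖z‖ + R := by linarith
  linarith

lemma exists_unique_normal_of_ball (hKc : IsClosed K) (hconv : Convex ℝ K)
    {z u : EuclideanSpace ℝ (Fin n)} {t : ℝ}
    (hz : z ∈ frontier K) (hu : ‖u‖ = 1) (ht : 0 < t)
    (hball : Metric.closedBall (z - t • u) t ⊆ K) :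
    ∃! w : EuclideanSpace ℝ (Fin n), ‖w‖ = 1 ∧ ∀ y ∈ K, ⟪y - z, w⟫ ≤ 0 := by
  have hzi : z ∉ interior K := hz.2
  exact ⟨u, ⟨hu, support_of_ball hconv hzi hu ht hball⟩,
    fun w hw => normal_eq_of_ball ht hu hball hw.1 hw.2⟩

lemma outerNormal_and_radius_of_ball (hKc : IsClosed K) (hKb : Bornology.IsBounded K)
    (hconv : Convex ℝ K) {z u : EuclideanSpace ℝ (Fin n)} {t : ℝ}
    (hz : z ∈ frontier K) (hu : ‖u‖ = 1) (ht : 0 < t)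
    (hball : Metric.closedBall (z - t • u) t ⊆ K) :
    outerNormalAt K z = u ∧ t ≤ rollingRadius K z := by
  have hEx := exists_unique_normal_of_ball hKc hconv hz hu ht hball
  have hNorm : outerNormalAt K z = u := by
    rw [outerNormalAt, dif_pos hEx]
    exact (hEx.choose_spec.2 u ⟨hu, support_of_ball hconv hz.2 hu ht hball⟩).symm
  refine ⟨hNorm, ?_⟩
  rw [rollingRadius, hNorm]
  exact le_csSup (bddAbove_rollSet hKb hu) ⟨ht.le, hball⟩

lemma facts_of_rollingRadius (hKc : IsClosed K) (hKb : Bornology.IsBounded K)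
    {z : EuclideanSpace ℝ (Fin n)} {t : ℝ}
    (hz : z ∈ frontier K) (ht : 0 < t) (hrr : t ≤ rollingRadius K z) :
    ‖outerNormalAt K z‖ = 1 ∧ (∀ y ∈ K, ⟪y - z, outerNormalAt K z⟫ ≤ 0) ∧
      Metric.closedBall (z - t • outerNormalAt K z) t ⊆ K := by
  have hzK : z ∈ K := by
    have := hz.1; rwa [hKc.closure_eq] at this
  by_cases hEx : ∃! w : EuclideanSpace ℝ (Fin n), ‖w‖ = 1 ∧ ∀ y ∈ K, ⟪y - z, w⟫ ≤ 0
  · have hNorm : outerNormalAt K z = hEx.choose := by rw [outerNormalAt, dif_pos hEx]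
    have hu : ‖outerNormalAt K z‖ = 1 := by rw [hNorm]; exact hEx.choose_spec.1.1
    have hsupp : ∀ y ∈ K, ⟪y - z, outerNormalAt K z⟫ ≤ 0 := by
      rw [hNorm]; exact hEx.choose_spec.1.2
    refine ⟨hu, hsupp, ?_⟩
    -- the ball of radius t is contained in K, by a limiting argument
    set u := outerNormalAt K z with hudef
    set S : Set ℝ := {ρ : ℝ | 0 ≤ ρ ∧ Metric.closedBall (z - ρ • u) ρ ⊆ K} with hSdef
    have hS0 : (0:ℝ) ∈ S := by
      refine ⟨le_refl 0, ?_⟩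
      intro x hx
      simp only [zero_smul, sub_zero, Metric.closedBall_zero, Set.mem_singleton_iff] at hx
      rwa [hx]
    have hdc : ∀ ρ ∈ S, ∀ ρ' : ℝ, 0 ≤ ρ' → ρ' ≤ ρ → ρ' ∈ S := by
      rintro ρ ⟨hρ0, hρK⟩ ρ' hρ'0 hle
      refine ⟨hρ'0, fun x hx => hρK ?_⟩
      rw [Metric.mem_closedBall, dist_eq_norm] at hx ⊢
      have hdist : ‖(z - ρ' • u) - (z - ρ • u)‖ = ρ - ρ' := by
        have : (z - ρ' • u) - (z - ρ • u) = (ρ - ρ') • u := by module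
        rw [this, norm_smul, Real.norm_eq_abs, abs_of_nonneg (by linarith), hu, mul_one]
      calc ‖x - (z - ρ • u)‖ ≤ ‖x - (z - ρ' • u)‖ + ‖(z - ρ' • u) - (z - ρ • u)‖ := by
            have : x - (z - ρ • u) = (x - (z - ρ' • u)) + ((z - ρ' • u) - (z - ρ • u)) := by abel
            rw [this]; exact norm_add_le _ _
        _ ≤ ρ' + (ρ - ρ') := by rw [hdist]; linarith
        _ = ρ := by ring
    have hrr' : t ≤ sSup S := hrr
    have hseq : ∀ k : ℕ, ∃ ρ : ℝ, ρ ∈ S ∧ t - 1/(k+1) < ρ ∧ ρ ≤ t := by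
      intro k
      have hpos : (0:ℝ) < 1/(k+1) := by positivity
      have hlt : t - 1/(k+1) < sSup S := by linarith
      obtain ⟨ρ, hρS, hρgt⟩ := exists_lt_of_lt_csSup ⟨0, hS0⟩ hlt
      refine ⟨min ρ t, hdc ρ hρS _ (le_min hρS.1 ht.le) (min_le_left _ _), ?_, min_le_right _ _⟩
      exact lt_min hρgt (by linarith)
    choose ρ hρS hρgt hρle using hseq
    have hρt : Filter.Tendsto ρ Filter.atTop (nhds t) := by
      apply tendsto_of_tendsto_of_tendsto_of_le_of_le
        (g := fun k : ℕ => t - 1/(k+1)) (h := fun _ : ℕ => t)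
      · have h1 : Filter.Tendsto (fun k : ℕ => 1/((k:ℝ)+1)) Filter.atTop (nhds 0) :=
          tendsto_one_div_add_atTop_nhds_zero_nat
        have := (tendsto_const_nhds (x := t) (f := Filter.atTop (α := ℕ))).sub h1
        simpa using this
      · exact tendsto_const_nhds
      · exact fun k => (hρgt k).le
      · exact fun k => hρle k
    intro x hx
    rw [Metric.mem_closedBall, dist_eq_norm] at hx
    set w : EuclideanSpace ℝ (Fin n) := x - (z - t • u) with hwdef
    have hxk : ∀ k : ℕ, (z - ρ k • u) + (ρ k / t) • w ∈ K := by
      intro k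
      apply (hρS k).2
      rw [Metric.mem_closedBall, dist_eq_norm]
      have hρ0 := (hρS k).1
      have : (z - ρ k • u) + (ρ k / t) • w - (z - ρ k • u) = (ρ k / t) • w := by abel
      rw [this, norm_smul, Real.norm_eq_abs, abs_of_nonneg (by positivity)]
      calc ρ k / t * ‖w‖ ≤ ρ k / t * t := by
            apply mul_le_mul_of_nonneg_left hx (by positivity)
        _ = ρ k := by field_simp
    have hcont : Continuous (fun s : ℝ => (z - s • u) + (s / t) • w) := by
      fun_prop
    have hlim : Filter.Tendsto (fun k : ℕ => (z - ρ k • u) + (ρ k / t) • w)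
        Filter.atTop (nhds x) := by
      have h2 := (hcont.tendsto t).comp hρt
      have h3 : (z - t • u) + (t / t) • w = x := by
        rw [div_self ht.ne', one_smul, hwdef]; abel
      simpa [h3, Function.comp_def] using h2
    exact hKc.mem_of_tendsto hlim (Filter.Eventually.of_forall hxk)
  · exfalso
    have hNorm : outerNormalAt K z = 0 := by rw [outerNormalAt, dif_neg hEx]
    have hSS : {ρ : ℝ | 0 ≤ ρ ∧ Metric.closedBall (z - ρ • outerNormalAt K z) ρ ⊆ K} = {0} := by
      ext ρ
      simp only [hNorm, smul_zero, sub_zero, Set.mem_setOf_eq, Set.mem_singleton_iff]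
      constructor
      · rintro ⟨hρ0, hρ⟩
        by_contra hne
        have hρpos : 0 < ρ := lt_of_le_of_ne hρ0 (Ne.symm hne)
        exact hz.2 (mem_interior.2 ⟨Metric.ball z ρ,
          (Metric.ball_subset_closedBall).trans hρ, Metric.isOpen_ball,
          Metric.mem_ball_self hρpos⟩)
      · rintro rfl
        exact ⟨le_refl 0, by
          intro x hx
          simp only [Metric.closedBall_zero, Set.mem_singleton_iff] at hx
          rwa [hx]⟩
    rw [rollingRadius, hSS, csSup_singleton] at hrr
    linarith

end Euc

section Slide
variable {n : ℕ} {K : Set (EuclideanSpace ℝ (Fin n))}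

lemma ball_sub_of_smul_mem (hconv : Convex ℝ K)
    (hball : Metric.closedBall (0 : EuclideanSpace ℝ (Fin n)) 1 ⊆ K)
    {t : ℝ} (ht0 : 0 < t) (ht1 : t ≤ 1) {y : EuclideanSpace ℝ (Fin n)}
    (hy : y ∈ (1 - t) • K) : Metric.closedBall y t ⊆ K := by
  obtain ⟨k, hk, rfl⟩ := hy
  intro x hx
  rw [Metric.mem_closedBall, dist_eq_norm] at hx
  have hb : t⁻¹ • (x - (1-t) • k) ∈ K := by
    apply hball
    rw [Metric.mem_closedBall, dist_zero_right, norm_smul, Real.norm_eq_abs,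
      abs_of_pos (by positivity)]
    rw [inv_mul_le_iff₀ ht0, mul_one]
    exact hx
  have hcomb := hconv hk hb (show (0:ℝ) ≤ 1 - t by linarith) ht0.le
    (show 1 - t + t = 1 by ring)
  have heq : (1-t) • k + t • (t⁻¹ • (x - (1-t) • k)) = x := by
    rw [smul_smul, mul_inv_cancel₀ ht0.ne', one_smul]; abel
  rwa [heq] at hcomb

lemma slide_exists (hK : IsCompact K) {y v : EuclideanSpace ℝ (Fin n)} {t : ℝ}
    (ht : 0 < t) (hv : ‖v‖ = 1) (hy : Metric.closedBall y t ⊆ K) :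
    ∃ s : ℝ, 0 ≤ s ∧ Metric.closedBall (y + s • v) t ⊆ K ∧
      ∃ z ∈ frontier K, ‖z - (y + s • v)‖ = t := by
  have hKc := hK.isClosed
  obtain ⟨R, hR⟩ := hK.isBounded.subset_closedBall (0 : EuclideanSpace ℝ (Fin n))
  set Sl : Set ℝ := {s : ℝ | 0 ≤ s ∧ Metric.closedBall (y + s • v) t ⊆ K} with hSldef
  have h0Sl : (0:ℝ) ∈ Sl := ⟨le_refl 0, by simpa using hy⟩
  have hbdd : BddAbove Sl := by
    refine ⟨‖y‖ + R, ?_⟩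
    rintro s ⟨hs0, hs⟩
    have hc : y + s • v ∈ K := hs (Metric.mem_closedBall_self ht.le)
    have hc2 := hR hc
    rw [Metric.mem_closedBall, dist_zero_right] at hc2
    have h1 : s = ‖(y + s • v) - y‖ := by
      rw [add_sub_cancel_left, norm_smul, Real.norm_eq_abs, abs_of_nonneg hs0, hv, mul_one]
    calc s = ‖(y + s • v) - y‖ := h1
      _ ≤ ‖y + s • v‖ + ‖y‖ := norm_sub_le _ _
      _ ≤ ‖y‖ + R := by linarith
  set s : ℝ := sSup Sl with hsdef
  have hs0 : 0 ≤ s := le_csSup hbdd h0Sl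
  have hsSl : s ∈ Sl := by
    refine ⟨hs0, ?_⟩
    intro x hx
    rw [Metric.mem_closedBall, dist_eq_norm] at hx
    have hseq : ∀ k : ℕ, ∃ sk : ℝ, sk ∈ Sl ∧ s - 1/(k+1) < sk := by
      intro k
      have hpos : (0:ℝ) < 1/((k:ℝ)+1) := by positivity
      exact exists_lt_of_lt_csSup ⟨0, h0Sl⟩ (by linarith)
    choose sk hskSl hskgt using hseq
    have hskle : ∀ k, sk k ≤ s := fun k => le_csSup hbdd (hskSl k)
    have hsktend : Filter.Tendsto sk Filter.atTop (nhds s) := by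
      apply tendsto_of_tendsto_of_tendsto_of_le_of_le
        (g := fun k : ℕ => s - 1/(k+1)) (h := fun _ : ℕ => s)
      · have h1 : Filter.Tendsto (fun k : ℕ => 1/((k:ℝ)+1)) Filter.atTop (nhds 0) :=
          tendsto_one_div_add_atTop_nhds_zero_nat
        have := (tendsto_const_nhds (x := s) (f := Filter.atTop (α := ℕ))).sub h1
        simpa using this
      · exact tendsto_const_nhds
      · exact fun k => (hskgt k).le
      · exact hskle
    have hxk : ∀ k : ℕ, x + (sk k - s) • v ∈ K := by
      intro k
      apply (hskSl k).2
      rw [Metric.mem_closedBall, dist_eq_norm]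
      have : x + (sk k - s) • v - (y + sk k • v) = x - (y + s • v) := by module
      rw [this]; exact hx
    have hlim : Filter.Tendsto (fun k : ℕ => x + (sk k - s) • v) Filter.atTop (nhds x) := by
      have hcont : Continuous (fun r : ℝ => x + (r - s) • v) := by fun_prop
      have h2 := (hcont.tendsto s).comp hsktend
      simpa [Function.comp_def] using h2
    exact hKc.mem_of_tendsto hlim (Filter.Eventually.of_forall hxk)
  refine ⟨s, hs0, hsSl.2, ?_⟩
  by_contra hcon
  push_neg at hcon
  -- then the closed ball is contained in the interior, and we can slide further
  have hsubint : Metric.closedBall (y + s • v) t ⊆ interior K := by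
    intro x hx
    have hxK : x ∈ K := hsSl.2 hx
    by_cases hxint : x ∈ interior K
    · exact hxint
    · exfalso
      have hxfr : x ∈ frontier K := ⟨subset_closure hxK, hxint⟩
      have hne := hcon x hxfr
      rw [Metric.mem_closedBall, dist_eq_norm] at hx
      have hlt : ‖x - (y + s • v)‖ < t := lt_of_le_of_ne hx hne
      have : x ∈ Metric.ball (y + s • v) t := by
        rw [Metric.mem_ball, dist_eq_norm]; exact hlt
      exact hxint (mem_interior.2 ⟨_, (Metric.ball_subset_closedBall).trans hsSl.2,
        Metric.isOpen_ball, this⟩)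
  obtain ⟨ε, hε, hthick⟩ := (isCompact_closedBall _ _).exists_thickening_subset_open
    isOpen_interior hsubint
  have hnew : s + ε/2 ∈ Sl := by
    refine ⟨by linarith, ?_⟩
    intro x hx
    rw [Metric.mem_closedBall, dist_eq_norm] at hx
    have hx' : x - (ε/2) • v ∈ Metric.closedBall (y + s • v) t := by
      rw [Metric.mem_closedBall, dist_eq_norm]
      have : x - (ε/2) • v - (y + s • v) = x - (y + (s + ε/2) • v) := by module
      rw [this]; exact hx
    have : x ∈ Metric.thickening ε (Metric.closedBall (y + s • v) t) := by
      rw [Metric.mem_thickening_iff]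
      refine ⟨x - (ε/2) • v, hx', ?_⟩
      rw [dist_eq_norm]
      have : x - (x - (ε/2) • v) = (ε/2) • v := by module
      rw [this, norm_smul, Real.norm_eq_abs, abs_of_pos (by linarith), hv, mul_one]
      linarith
    exact interior_subset (hthick this)
  have := le_csSup hbdd hnew
  linarith

end Slide

section P6
variable {n : ℕ} {K : Set (EuclideanSpace ℝ (Fin n))}


lemma superlevel_closed (hK : IsCompact K) (hconv : Convex ℝ K) {t : ℝ} (ht0 : 0 < t) :
    IsClosed {x | x ∈ frontier K ∧ t ≤ rollingRadius K x} := by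
  have hKc := hK.isClosed
  have hKb := hK.isBounded
  apply IsSeqClosed.isClosed
  intro zs z hzs hlim
  have hzfr : z ∈ frontier K :=
    isClosed_frontier.mem_of_tendsto hlim (Filter.Eventually.of_forall fun k => (hzs k).1)
  have hfacts := fun k => facts_of_rollingRadius hKc hKb (hzs k).1 ht0 (hzs k).2
  have hmem : ∀ k, outerNormalAt K (zs k) ∈ Metric.sphere (0 : EuclideanSpace ℝ (Fin n)) 1 := by
    intro k
    rw [mem_sphere_zero_iff_norm]
    exact (hfacts k).1
  obtain ⟨u, humem, φ, hφ, hulim⟩ := (isCompact_sphere _ _).tendsto_subseq hmem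
  have hu : ‖u‖ = 1 := mem_sphere_zero_iff_norm.1 humem
  have hzlim : Filter.Tendsto (fun k => zs (φ k)) Filter.atTop (nhds z) :=
    hlim.comp hφ.tendsto_atTop
  have hball : Metric.closedBall (z - t • u) t ⊆ K := by
    intro x hx
    rw [Metric.mem_closedBall, dist_eq_norm] at hx
    have hxk : ∀ k, x - (z - t • u) + (zs (φ k) - t • outerNormalAt K (zs (φ k))) ∈ K := by
      intro k
      apply (hfacts (φ k)).2.2
      rw [Metric.mem_closedBall, dist_eq_norm]
      have : x - (z - t • u) + (zs (φ k) - t • outerNormalAt K (zs (φ k)))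
          - (zs (φ k) - t • outerNormalAt K (zs (φ k))) = x - (z - t • u) := by abel
      rw [this]; exact hx
    have hlim2 : Filter.Tendsto
        (fun k => x - (z - t • u) + (zs (φ k) - t • outerNormalAt K (zs (φ k))))
        Filter.atTop (nhds x) := by
      have h1 : Filter.Tendsto (fun k => zs (φ k) - t • outerNormalAt K (zs (φ k)))
          Filter.atTop (nhds (z - t • u)) := hzlim.sub (hulim.const_smul t)
      have h2 := (tendsto_const_nhds (x := x - (z - t • u))
        (f := Filter.atTop (α := ℕ))).add h1
      simpa using h2
    exact hKc.mem_of_tendsto hlim2 (Filter.Eventually.of_forall hxk)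
  exact ⟨hzfr, (outerNormal_and_radius_of_ball hKc hKb hconv hzfr hu ht0 hball).2⟩

end P6

section OneD

lemma norm_oneD (w : EuclideanSpace ℝ (Fin 1)) : ‖w‖ = |w 0| := by
  rw [EuclideanSpace.norm_eq]
  simp [Fin.sum_univ_one, Real.sqrt_sq_eq_abs]

lemma ext_oneD {w w' : EuclideanSpace ℝ (Fin 1)} (h : w 0 = w' 0) : w = w' := by
  apply PiLp.ext; intro i
  have : i = 0 := Subsingleton.elim i 0
  rwa [this]

variable {K : Set (EuclideanSpace ℝ (Fin 1))}

lemma oneD_ball (hK : IsCompact K) (hconv : Convex ℝ K)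
    (hball : Metric.closedBall (0 : EuclideanSpace ℝ (Fin 1)) 1 ⊆ K)
    {z : EuclideanSpace ℝ (Fin 1)} (hz : z ∈ frontier K) :
    ∃ u : EuclideanSpace ℝ (Fin 1), ‖u‖ = 1 ∧
      Metric.closedBall (z - (1:ℝ) • u) 1 ⊆ K := by
  have hzK : z ∈ K := by have := hz.1; rwa [hK.isClosed.closure_eq] at this
  have h0K : (0 : EuclideanSpace ℝ (Fin 1)) ∈ K :=
    hball (Metric.mem_closedBall_self zero_le_one)
  have hz1 : 1 ≤ ‖z‖ := by
    by_contra hlt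
    push_neg at hlt
    exact hz.2 (mem_interior.2 ⟨Metric.ball 0 1,
      (Metric.ball_subset_closedBall).trans hball, Metric.isOpen_ball,
      by rwa [Metric.mem_ball, dist_zero_right]⟩)
  have hzne : ‖z‖ ≠ 0 := by linarith
  set u : EuclideanSpace ℝ (Fin 1) := ‖z‖⁻¹ • z with hudef
  have hu : ‖u‖ = 1 := by
    rw [hudef, norm_smul, Real.norm_eq_abs, abs_of_pos (by positivity), inv_mul_cancel₀ hzne]
  refine ⟨u, hu, ?_⟩
  -- the far endpoint is in K
  have hfar : z - (2:ℝ) • u ∈ K := by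
    have heq : z - (2:ℝ) • u = (1 - 2/‖z‖) • z := by
      rw [hudef]; match_scalars; field_simp
    rw [heq]
    rcases le_or_gt 0 (1 - 2/‖z‖) with hc | hc
    · have hc1 : 1 - 2/‖z‖ ≤ 1 := by
        have : 0 < 2/‖z‖ := by positivity
        linarith
      have := hconv hzK h0K hc (show (0:ℝ) ≤ 1 - (1 - 2/‖z‖) by linarith) (by ring)
      simpa using this
    · apply hball
      rw [Metric.mem_closedBall, dist_zero_right, norm_smul, Real.norm_eq_abs, abs_of_neg hc]
      have h2 : 2/‖z‖ ≤ 2 := by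
        rw [div_le_iff₀ (by positivity)]
        nlinarith
      have hzlt : ‖z‖ < 2 := by
        by_contra hge
        push_neg at hge
        have : 2/‖z‖ ≤ 1 := by rw [div_le_one (by positivity)]; linarith
        linarith
      have hdm : 2/‖z‖ * ‖z‖ = 2 := div_mul_cancel₀ 2 hzne
      nlinarith [hz1, hzlt, hdm]
  -- now the closed ball is inside the segment
  intro x hx
  rw [Metric.mem_closedBall, dist_eq_norm] at hx
  set a : ℝ := z 0 with hadef
  have hnz : ‖z‖ = |a| := norm_oneD z
  have hu0 : u 0 = ‖z‖⁻¹ * a := by rw [hudef]; simp [PiLp.smul_apply, smul_eq_mul, hadef]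
  have habs : 1 ≤ |a| := by rwa [hnz] at hz1
  have hane : a ≠ 0 := by
    intro h; rw [h, abs_zero] at habs; linarith
  set ξ : ℝ := x 0 with hξdef
  have hxcoord : |ξ - (a - ‖z‖⁻¹ * a)| ≤ 1 := by
    have h1 : (x - (z - (1:ℝ) • u)) 0 = ξ - (a - ‖z‖⁻¹ * a) := by
      simp [PiLp.sub_apply, PiLp.smul_apply, hu0, hξdef, hadef, smul_eq_mul]
    have h2 := hx
    rw [norm_oneD, h1] at h2
    exact h2
  -- choose the convex coefficient
  rcases le_abs.1 habs with ha | ha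
  · -- 1 ≤ a
    have hapos : 0 < a := by linarith
    have habsa : |a| = a := abs_of_pos hapos
    have hu01 : u 0 = 1 := by rw [hu0, hnz, habsa, inv_mul_cancel₀ hane]
    have hxc : |ξ - (a - 1)| ≤ 1 := by
      rw [hnz, habsa, inv_mul_cancel₀ hane] at hxcoord; exact hxcoord
    set α : ℝ := (a - ξ)/2 with hαdef
    have hα0 : 0 ≤ α := by
      rw [hαdef]; rw [abs_le] at hxc; linarith
    have hα1 : α ≤ 1 := by
      rw [hαdef]; rw [abs_le] at hxc; linarith
    have hcomb := hconv hfar hzK hα0 (show (0:ℝ) ≤ 1 - α by linarith) (by ring)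
    have hxeq : x = α • (z - (2:ℝ) • u) + (1 - α) • z := by
      apply ext_oneD
      simp only [PiLp.add_apply, PiLp.smul_apply, PiLp.sub_apply, smul_eq_mul, hu01]
      rw [← hξdef, ← hadef, hαdef]; ring
    rwa [hxeq]
  · -- 1 ≤ -a
    have haneg : a < 0 := by linarith
    have habsa : |a| = -a := abs_of_neg haneg
    have hu01 : u 0 = -1 := by
      rw [hu0, hnz, habsa]
      field_simp
    have hxc : |ξ - (a + 1)| ≤ 1 := by
      rw [hnz, habsa] at hxcoord
      have : a - (-a)⁻¹ * a = a + 1 := by field_simp; ring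
      rwa [this] at hxcoord
    set α : ℝ := (ξ - a)/2 with hαdef
    have hα0 : 0 ≤ α := by
      rw [hαdef]; rw [abs_le] at hxc; linarith
    have hα1 : α ≤ 1 := by
      rw [hαdef]; rw [abs_le] at hxc; linarith
    have hcomb := hconv hfar hzK hα0 (show (0:ℝ) ≤ 1 - α by linarith) (by ring)
    have hxeq : x = α • (z - (2:ℝ) • u) + (1 - α) • z := by
      apply ext_oneD
      simp only [PiLp.add_apply, PiLp.smul_apply, PiLp.sub_apply, smul_eq_mul, hu01]
      rw [← hξdef, ← hadef, hαdef]; ring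
    rwa [hxeq]

end OneD


/-- For a convex body `K ⊆ ℝⁿ` containing the unit ball and `0 < t ≤ 1`, the set
`{x ∈ ∂K : r_K(x) ≥ t}` is closed and its `(n-1)`-dimensional Hausdorff measure is at
least `(1-t)^{n-1}` times the surface area of `K`. -/
theorem rollingRadius_superlevel_closed_and_measure
    (n : ℕ) (K : Set (EuclideanSpace ℝ (Fin n)))
    (hK : IsCompact K) (hconv : Convex ℝ K)
    (hball : Metric.closedBall (0 : EuclideanSpace ℝ (Fin n)) 1 ⊆ K)
    (t : ℝ) (ht0 : 0 < t) (ht1 : t ≤ 1) :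
    IsClosed {x | x ∈ frontier K ∧ t ≤ rollingRadius K x} ∧
    ENNReal.ofReal ((1 - t) ^ (n - 1)) * μH[(n : ℝ) - 1] (frontier K)
      ≤ μH[(n : ℝ) - 1] {x | x ∈ frontier K ∧ t ≤ rollingRadius K x} := by
  have hKc := hK.isClosed
  have hKb := hK.isBounded
  have h0K : (0 : EuclideanSpace ℝ (Fin n)) ∈ K :=
    hball (Metric.mem_closedBall_self zero_le_one)
  rcases Nat.eq_zero_or_pos n with hn0 | hn1
  · -- n = 0 : the space is a single point, K = univ, frontier K = ∅
    subst hn0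
    have hx0 : ∀ x : EuclideanSpace ℝ (Fin 0), x = 0 := fun x => PiLp.ext fun i => i.elim0
    have hKuniv : K = Set.univ := Set.eq_univ_of_forall fun x => by
      rw [hx0 x]; exact h0K
    have hfr : frontier K = ∅ := by rw [hKuniv, frontier_univ]
    have hA : {x | x ∈ frontier K ∧ t ≤ rollingRadius K x} = ∅ := by
      apply Set.eq_empty_of_forall_notMem
      intro x hx
      rw [hfr] at hx
      exact hx.1
    rw [hA, hfr]
    simp
  · -- n ≥ 1
    constructor
    · exact superlevel_closed hK hconv ht0
    rcases eq_or_lt_of_le (Nat.succ_le_of_lt hn1) with hn1' | hn2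
    · -- n = 1 : the superlevel set is all of the boundary
      have hn : n = 1 := hn1'.symm
      subst hn
      have hAeq : {x | x ∈ frontier K ∧ t ≤ rollingRadius K x} = frontier K := by
        ext x
        constructor
        · exact fun h => h.1
        · intro hx
          obtain ⟨u, hu, hb⟩ := oneD_ball hK hconv hball hx
          have h1 := outerNormal_and_radius_of_ball hKc hKb hconv hx hu one_pos hb
          exact ⟨hx, le_trans ht1 h1.2⟩
      rw [hAeq]
      simp
    · rcases eq_or_lt_of_le ht1 with ht1' | htlt
      · -- t = 1 and n ≥ 2 : the coefficient is zero
        subst ht1'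
        have : (1 - (1:ℝ)) ^ (n - 1) = 0 := by
          rw [sub_self]
          exact zero_pow (by omega)
        rw [this]
        simp
      · -- main case : 0 < t < 1
        have h1t : (0:ℝ) < 1 - t := by linarith
        set A : Set (EuclideanSpace ℝ (Fin n)) := {x | x ∈ frontier K ∧ t ≤ rollingRadius K x} with hAdef
        set C : Set (EuclideanSpace ℝ (Fin n)) := (1 - t) • K with hCdef
        have hCcompact : IsCompact C := hK.smul (1 - t)
        have hCcl : IsClosed C := hCcompact.isClosed
        have hCconv : Convex ℝ C := hconv.smul (1 - t)
        have hCne : C.Nonempty := ⟨(1 - t) • 0, Set.smul_mem_smul_set h0K⟩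
        have h0int : (0 : EuclideanSpace ℝ (Fin n)) ∈ interior C := by
          have hsub : Metric.ball (0 : EuclideanSpace ℝ (Fin n)) (1 - t) ⊆ C := by
            intro x hx
            rw [Metric.mem_ball, dist_zero_right] at hx
            have hxk : (1 - t)⁻¹ • x ∈ K := by
              apply hball
              rw [Metric.mem_closedBall, dist_zero_right, norm_smul, Real.norm_eq_abs,
                abs_of_pos (by positivity)]
              rw [inv_mul_le_iff₀ h1t, mul_one]
              exact hx.le
            exact ⟨(1 - t)⁻¹ • x, hxk, by
              show (1 - t) • ((1 - t)⁻¹ • x) = x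
              rw [smul_smul, mul_inv_cancel₀ h1t.ne', one_smul]⟩
          exact mem_interior.2 ⟨_, hsub, Metric.isOpen_ball, Metric.mem_ball_self h1t⟩
        choose P hPmem hPvar using fun x => exists_proj hCcl hCconv hCne x
        set Ψ : EuclideanSpace ℝ (Fin n) → EuclideanSpace ℝ (Fin n) := fun x => P (x - t • outerNormalAt K x) with hΨdef
        have hfct := fun z (hz : z ∈ A) => facts_of_rollingRadius hKc hKb hz.1 ht0 hz.2
        -- Ψ is 1-Lipschitz on A
        have hlip : LipschitzOnWith 1 Ψ A := by
          apply LipschitzOnWith.of_dist_le_mul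
          intro z₁ hz₁ z₂ hz₂
          obtain ⟨hu₁, hs₁, hb₁⟩ := hfct z₁ hz₁
          obtain ⟨hu₂, hs₂, hb₂⟩ := hfct z₂ hz₂
          rw [NNReal.coe_one, one_mul, dist_eq_norm, dist_eq_norm]
          set u₁ := outerNormalAt K z₁
          set u₂ := outerNormalAt K z₂
          have step1 : ‖Ψ z₁ - Ψ z₂‖ ≤ ‖(z₁ - t • u₁) - (z₂ - t • u₂)‖ :=
            proj_lip_alg _ _ _ _ (hPvar _ _ (hPmem (z₂ - t • u₂)))
              (hPvar _ _ (hPmem (z₁ - t • u₁)))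
          have hy₁ : z₂ - t • u₂ + t • u₁ ∈ K := by
            apply hb₂
            rw [Metric.mem_closedBall, dist_eq_norm]
            have : z₂ - t • u₂ + t • u₁ - (z₂ - t • u₂) = t • u₁ := by abel
            rw [this, norm_smul, Real.norm_eq_abs, abs_of_pos ht0, hu₁, mul_one]
          have hy₂ : z₁ - t • u₁ + t • u₂ ∈ K := by
            apply hb₁
            rw [Metric.mem_closedBall, dist_eq_norm]
            have : z₁ - t • u₁ + t • u₂ - (z₁ - t • u₁) = t • u₂ := by abel
            rw [this, norm_smul, Real.norm_eq_abs, abs_of_pos ht0, hu₂, mul_one]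
          have step2 := center_lip ht0.le z₁ z₂ u₁ u₂ hu₁ hu₂
            (hs₁ _ hy₁) (hs₂ _ hy₂)
          exact step1.trans step2
        -- Ψ maps A onto the boundary of C
        have hsurj : frontier C ⊆ Ψ '' A := by
          intro y hy
          have hyC : y ∈ C := by have := hy.1; rwa [hCcl.closure_eq] at this
          obtain ⟨v, hv, hvs⟩ := exists_unit_support hCconv hCcl h0int hy
          have hyball : Metric.closedBall y t ⊆ K :=
            ball_sub_of_smul_mem hconv hball ht0 ht1 hyC
          obtain ⟨s, hs0, hsball, z, hzfr, hznorm⟩ := slide_exists hK ht0 hv hyball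
          set u : EuclideanSpace ℝ (Fin n) := t⁻¹ • (z - (y + s • v)) with hudef
          have hu : ‖u‖ = 1 := by
            rw [hudef, norm_smul, Real.norm_eq_abs, abs_of_pos (by positivity), hznorm,
              inv_mul_cancel₀ ht0.ne']
          have hzu : z - t • u = y + s • v := by
            rw [hudef, smul_inv_smul₀ ht0.ne', sub_sub_cancel]
          have hballz : Metric.closedBall (z - t • u) t ⊆ K := by rw [hzu]; exact hsball
          obtain ⟨hNorm, hrr⟩ :=
            outerNormal_and_radius_of_ball hKc hKb hconv hzfr hu ht0 hballz
          refine ⟨z, ⟨hzfr, hrr⟩, ?_⟩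
          show P (z - t • outerNormalAt K z) = y
          rw [hNorm, hzu]
          have h₁ : ⟪(y + s • v) - P (y + s • v), y - P (y + s • v)⟫ ≤ 0 :=
            hPvar _ y hyC
          have h₂ : ⟪(y + s • v) - y, P (y + s • v) - y⟫ ≤ 0 := by
            rw [add_sub_cancel_left, real_inner_smul_left]
            have := hvs _ (hPmem (y + s • v))
            rw [real_inner_comm] at this
            exact mul_nonpos_of_nonneg_of_nonpos hs0 this
          have hle := proj_lip_alg (y + s • v) (y + s • v) (P (y + s • v)) y h₁ h₂
          rw [sub_self, norm_zero] at hle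
          have := le_antisymm hle (norm_nonneg _)
          rwa [norm_eq_zero, sub_eq_zero] at this
        -- the measure estimate
        have hd0 : (0:ℝ) ≤ (n : ℝ) - 1 := by
          have : (1:ℝ) ≤ (n:ℝ) := by exact_mod_cast hn1
          linarith
        have hfrC : frontier C = (1 - t) • frontier K := by
          show closure C \ interior C = _
          rw [hCdef, closure_smul₀' h1t.ne', interior_smul₀ h1t.ne',
            ← Set.smul_set_sdiff₀ h1t.ne']
          rfl
        have hcoef : ENNReal.ofReal ((1 - t) ^ (n - 1))
            = ((‖(1 - t)‖₊ ^ ((n:ℝ) - 1) : ℝ≥0) : ℝ≥0∞) := by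
          have hc1 : ((n:ℝ) - 1) = ((n - 1 : ℕ) : ℝ) := by
            rw [Nat.cast_sub hn1, Nat.cast_one]
          rw [hc1, NNReal.rpow_natCast, ENNReal.coe_pow, ENNReal.ofReal_pow h1t.le]
          congr 1
          rw [Real.nnnorm_of_nonneg h1t.le]
          simp [ENNReal.ofReal, Real.toNNReal_of_nonneg h1t.le]
        calc ENNReal.ofReal ((1 - t) ^ (n - 1)) * μH[(n : ℝ) - 1] (frontier K)
            = μH[(n : ℝ) - 1] (frontier C) := by
              rw [hfrC, MeasureTheory.Measure.hausdorffMeasure_smul₀ hd0 h1t.ne'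
                (frontier K), hcoef, ENNReal.smul_def, smul_eq_mul]
          _ ≤ μH[(n : ℝ) - 1] (Ψ '' A) := measure_mono hsurj
          _ ≤ ((1:ℝ≥0) : ℝ≥0∞) ^ ((n:ℝ) - 1) * μH[(n : ℝ) - 1] A :=
              hlip.hausdorffMeasure_image_le hd0
          _ = μH[(n : ℝ) - 1] A := by
              rw [ENNReal.coe_one, ENNReal.one_rpow, one_mul]
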